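/- arXiv:math/0610526 — 6 statements merged into one kernel-verified Lean document; each statement's English description precedes it below -/
import Mathlib

section
/- Let L be a multiplicative abelian group, g = (g_1,…,g_n) a local monodromy vector of rank r on L, and β a convoluter for n points. Then the total determinant is preserved by the Katz transformation: Det(κ(β,g)) = Det(g). In particular, if Det(g) = 1 then Det(κ(β,g)) = 1. -/
open Finset

/-- The degree of a divisor (a finitely supported `ℤ`-valued function) on an abelian group. -/
noncomputable def divDeg {L : Type*} [CommGroup L] (g : L →₀ ℤ) : ℤ :=
  g.sum fun _ m => m

/-- A convoluter for `n` points: elements `β^{H_i}, β^{V_i}, β^{U_i}, β^T` of `L`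
subject to the relations coming from the diagonal configuration. -/
structure Convoluter (L : Type*) [CommGroup L] (n : ℕ) where
  H : Fin n → L
  V : Fin n → L
  U : Fin n → L
  T : L
  relH : T * ∏ i, H i = 1
  relV : T * ∏ i, V i = 1
  relU : ∀ i, U i = H i * V i * T

/-- The defect `δ(β,g) = (n-2)r - Σ_i m_i((β^{H_i})⁻¹)`. -/
noncomputable def defect {L : Type*} [CommGroup L] {n : ℕ} (β : Convoluter L n)
    (g : Fin n → (L →₀ ℤ)) (r : ℤ) : ℤ :=
  ((n : ℤ) - 2) * r - ∑ i, g i (β.H i)⁻¹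

/-- The local Katz transformation
`κ_i(β,g) = (m_i((β^{H_i})⁻¹) + δ)·[β^{V_i}] - m_i((β^{H_i})⁻¹)·[β^{V_i}β^T] + Σ_α m_i(α)·[αβ^{U_i}]`. -/
noncomputable def katz {L : Type*} [CommGroup L] {n : ℕ} (β : Convoluter L n)
    (g : Fin n → (L →₀ ℤ)) (r : ℤ) (i : Fin n) : L →₀ ℤ :=
  Finsupp.single (β.V i) (g i (β.H i)⁻¹ + defect β g r)
    - Finsupp.single (β.V i * β.T) (g i (β.H i)⁻¹)
    + Finsupp.mapDomain (fun α => α * β.U i) (g i)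

/-- The determinant `det(g) = ∏_α α^{m(α)}` of a divisor on an abelian group. -/
noncomputable def divDet {L : Type*} [CommGroup L] (g : L →₀ ℤ) : L :=
  g.prod fun α m => α ^ m

section katzAux
variable {L : Type*} [CommGroup L]

lemma divDet_add (f g : L →₀ ℤ) : divDet (f + g) = divDet f * divDet g :=
  Finsupp.prod_add_index' (fun a => zpow_zero a) (fun a b c => zpow_add a b c)

lemma divDet_single (a : L) (m : ℤ) : divDet (Finsupp.single a m) = a ^ m :=
  Finsupp.prod_single_index (zpow_zero a)

lemma zpow_sum' {ι : Type*} (s : Finset ι) (f : ι → ℤ) (a : L) :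
    ∏ i ∈ s, a ^ f i = a ^ ∑ i ∈ s, f i := by
  classical
  induction s using Finset.induction with
  | empty => simp
  | insert _ _ h ih => rw [Finset.prod_insert h, Finset.sum_insert h, ih, zpow_add]

lemma divDet_mapDomain (c : L) (g : L →₀ ℤ) :
    divDet (Finsupp.mapDomain (fun α => α * c) g) = divDet g * c ^ divDeg g := by
  rw [divDet, Finsupp.prod_mapDomain_index (fun a => zpow_zero _)
    (fun a b c' => zpow_add _ b c')]
  unfold divDet divDeg
  rw [Finsupp.prod, Finsupp.sum]
  simp only [mul_zpow]
  rw [Finset.prod_mul_distrib, zpow_sum']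
  rfl

lemma divDet_katz {n : ℕ} (r : ℤ) (g : Fin n → (L →₀ ℤ)) (hg : ∀ i, divDeg (g i) = r)
    (β : Convoluter L n) (i : Fin n) :
    divDet (katz β g r i) = divDet (g i) *
      (β.V i ^ defect β g r * β.T ^ (-(g i (β.H i)⁻¹)) *
        (β.H i ^ r * β.V i ^ r * β.T ^ r)) := by
  have : katz β g r i = Finsupp.single (β.V i) (g i (β.H i)⁻¹ + defect β g r)
      + Finsupp.single (β.V i * β.T) (-(g i (β.H i)⁻¹))
      + Finsupp.mapDomain (fun α => α * β.U i) (g i) := by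
    rw [katz, sub_eq_add_neg, ← Finsupp.single_neg]
  rw [this, divDet_add, divDet_add, divDet_single, divDet_single, divDet_mapDomain,
    hg i, β.relU i]
  apply Additive.ofMul.injective
  simp only [ofMul_mul, ofMul_zpow]
  module

end katzAux

/-- The total determinant `Det(g) = det(g_1)⋯det(g_n)` is preserved by the Katz
transformation; in particular if `Det(g) = 1` then `Det(κ(β,g)) = 1`. -/


theorem katz_total_det {L : Type*} [CommGroup L] {n : ℕ} (r : ℤ)
    (g : Fin n → (L →₀ ℤ)) (hg : ∀ i, divDeg (g i) = r) (β : Convoluter L n) :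
    (∏ i, divDet (katz β g r i)) = ∏ i, divDet (g i) ∧
    ((∏ i, divDet (g i)) = 1 → (∏ i, divDet (katz β g r i)) = 1) := by
  classical
  have hV : ∏ i, β.V i = β.T⁻¹ := eq_inv_of_mul_eq_one_left (by rw [mul_comm]; exact β.relV)
  have hH : ∏ i, β.H i = β.T⁻¹ := eq_inv_of_mul_eq_one_left (by rw [mul_comm]; exact β.relH)
  have key : (∏ i, divDet (katz β g r i)) = ∏ i, divDet (g i) := by
    calc (∏ i, divDet (katz β g r i))
        = ∏ i, (divDet (g i) * (β.V i ^ defect β g r * β.T ^ (-(g i (β.H i)⁻¹)) *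
            (β.H i ^ r * β.V i ^ r * β.T ^ r))) := by
          exact Finset.prod_congr rfl fun i _ => divDet_katz r g hg β i
      _ = (∏ i, divDet (g i)) * ((∏ i, β.V i) ^ defect β g r *
            (∏ i, β.T ^ (-(g i (β.H i)⁻¹))) *
            ((∏ i, β.H i) ^ r * (∏ i, β.V i) ^ r * (∏ (_ : Fin n), β.T ^ r))) := by
          simp only [Finset.prod_mul_distrib, Finset.prod_zpow]
      _ = ∏ i, divDet (g i) := by
          rw [hV, hH, zpow_sum', Finset.prod_const, Finset.card_univ, Fintype.card_fin,
            ← zpow_natCast (β.T ^ r) n, ← zpow_mul]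
          simp only [inv_zpow, ← zpow_neg, ← zpow_add]
          rw [defect]
          ring_nf
          simp
  exact ⟨key, fun h => key.trans h⟩
end

section
/- Let L be a multiplicative abelian group, g = (g_1,…,g_n) a local monodromy vector of rank r on L, and β a convoluter. Let γ := c*β* be the inverse convoluter, defined by γ^{H_i} = (β^{V_i})^{−1}, γ^{V_i} = (β^{H_i})^{−1}, γ^{U_i} = (β^{U_i})^{−1}, γ^T = (β^T)^{−1}. Assume the conventions hold for the pair (β,g): β^T ≠ 1, and for every i and every α in the support of g_i one has α·β^{H_i}·β^T ≠ 1; and assume the same conventions hold for the pair (γ, κ(β,g)): γ^T ≠ 1, and for every i and every φ in the support of κ_i(β,g) one has φ·γ^{H_i}·γ^T ≠ 1. Then the Katz transformation is involutive on local monodromy data: κ(c*β*, κ(β,g)) = g. -/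
open Finset

/-- The inverse convoluter `c*β*`, with `(c*β*)^{H_i} = (β^{V_i})⁻¹`,
`(c*β*)^{V_i} = (β^{H_i})⁻¹`, `(c*β*)^{U_i} = (β^{U_i})⁻¹`, `(c*β*)^T = (β^T)⁻¹`. -/
def Convoluter.star {L : Type*} [CommGroup L] {n : ℕ} (β : Convoluter L n) :
    Convoluter L n where
  H i := (β.V i)⁻¹
  V i := (β.H i)⁻¹
  U i := (β.U i)⁻¹
  T := (β.T)⁻¹
  relH := by
    have h : (β.T * ∏ i, β.V i)⁻¹ = 1 := by rw [β.relV, inv_one]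
    simpa [mul_inv, Finset.prod_inv_distrib, mul_comm] using h
  relV := by
    have h : (β.T * ∏ i, β.H i)⁻¹ = 1 := by rw [β.relH, inv_one]
    simpa [mul_inv, Finset.prod_inv_distrib, mul_comm] using h
  relU i := by
    show (β.U i)⁻¹ = (β.V i)⁻¹ * (β.H i)⁻¹ * β.T⁻¹
    rw [β.relU i, mul_inv, mul_inv, mul_comm (β.H i)⁻¹ (β.V i)⁻¹]


private lemma mapDomain_sub' {A B : Type*} (f : A → B) (u v : A →₀ ℤ) :
    Finsupp.mapDomain f (u - v) = Finsupp.mapDomain f u - Finsupp.mapDomain f v :=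
  map_sub (Finsupp.mapDomain.addMonoidHom f) u v

/-- Involutivity of the Katz transformation on local monodromy data:
under the conventions for both the pair `(β, g)` and the inverse pair
`(c*β*, κ(β,g))`, one has `κ(c*β*, κ(β,g)) = g`. -/
theorem katz_involutive {L : Type*} [CommGroup L] {n : ℕ} (r : ℤ)
    (g : Fin n → (L →₀ ℤ)) (hg : ∀ i, divDeg (g i) = r) (β : Convoluter L n)
    (hβT : β.T ≠ 1)
    (hβconv : ∀ i, ∀ α ∈ (g i).support, α * β.H i * β.T ≠ 1)
    (hγT : β.star.T ≠ 1)
    (hγconv : ∀ i, ∀ φ ∈ (katz β g r i).support, φ * β.star.H i * β.star.T ≠ 1) :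
    ∀ i, katz β.star (katz β g r) (r + defect β g r) i = g i := by
  intro i
  set δ := defect β g r with hδ
  have hκV : ∀ j, katz β g r j (β.V j) = g j (β.H j)⁻¹ + δ := by
    intro j
    have hUinj : Function.Injective (fun α : L => α * β.U j) :=
      fun x y h => by simpa using h
    have hb : β.V j = (fun α : L => α * β.U j) ((β.H j * β.T)⁻¹) := by
      show β.V j = (β.H j * β.T)⁻¹ * β.U j
      rw [β.relU j, mul_inv]
      rw [show β.H j * β.V j * β.T = β.H j * β.T * β.V j from mul_right_comm _ _ _]
      simp [mul_comm, mul_left_comm, mul_assoc]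
    have h0 : g j ((β.H j * β.T)⁻¹) = 0 := by
      by_contra h
      exact hβconv j _ (Finsupp.mem_support_iff.mpr h) (by group)
    have hmap : Finsupp.mapDomain (fun α : L => α * β.U j) (g j) (β.V j) = 0 := by
      rw [hb, Finsupp.mapDomain_apply hUinj, h0]
    have hne : β.V j * β.T ≠ β.V j := by
      intro h; exact hβT (by simpa using h)
    rw [katz, Finsupp.add_apply, Finsupp.sub_apply, hmap,
      Finsupp.single_eq_same, Finsupp.single_eq_of_ne' hne]
    ring
  have hδ' : defect β.star (katz β g r) (r + δ) = -δ := by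
    have h1 : ∀ j, katz β g r j ((β.star.H j)⁻¹) = g j (β.H j)⁻¹ + δ := by
      intro j
      show katz β g r j ((β.V j)⁻¹)⁻¹ = _
      rw [inv_inv]; exact hκV j
    rw [defect]
    simp only [h1, Finset.sum_add_distrib, Finset.sum_const, Finset.card_univ,
      Fintype.card_fin, nsmul_eq_mul]
    have hδeq : δ = ((n : ℤ) - 2) * r - ∑ j, g j (β.H j)⁻¹ := hδ
    linarith [hδeq]
  rw [katz, hδ']
  have hH : (β.star.H i)⁻¹ = β.V i := by show ((β.V i)⁻¹)⁻¹ = _; rw [inv_inv]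
  rw [hH, hκV i]
  have hV : β.star.V i = (β.H i)⁻¹ := rfl
  have hT : β.star.T = (β.T)⁻¹ := rfl
  have hU : β.star.U i = (β.U i)⁻¹ := rfl
  rw [hV, hT, hU, katz]
  rw [Finsupp.mapDomain_add, mapDomain_sub', Finsupp.mapDomain_single,
    Finsupp.mapDomain_single, ← Finsupp.mapDomain_comp, ← hδ]
  have hcomp : ((fun α : L => α * (β.U i)⁻¹) ∘ fun α : L => α * β.U i) = id := by
    funext x; simp
  rw [hcomp, Finsupp.mapDomain_id]
  have e1 : β.V i * (β.U i)⁻¹ = (β.H i)⁻¹ * β.T⁻¹ := by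
    rw [β.relU i]
    simp [mul_inv, mul_comm, mul_left_comm, mul_assoc]
  have e2 : β.V i * β.T * (β.U i)⁻¹ = (β.H i)⁻¹ := by
    rw [β.relU i]; group
  rw [e1, e2]
  have e3 : g i (β.H i)⁻¹ + δ + -δ = g i (β.H i)⁻¹ := by ring
  rw [e3]
  abel
end

section
/- Let L be a multiplicative abelian group, g = (g_1,…,g_n) a local monodromy vector of rank r on L, and β a convoluter, and let γ := c*β* be the inverse convoluter with γ^{H_i} = (β^{V_i})^{−1}, γ^{V_i} = (β^{H_i})^{−1}, γ^{U_i} = (β^{U_i})^{−1}, γ^T = (β^T)^{−1}. Assume β^T ≠ 1, and that for every i and every α in the support of g_i one has α·β^{H_i}·β^T ≠ 1. Then the defect of the inverse pair is the negative of the original defect: δ(c*β*, κ(β,g)) = −δ(β,g). Consequently the rank of κ(c*β*, κ(β,g)) equals r. -/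
open Finset

lemma divDeg_add {L : Type*} [CommGroup L] (f g : L →₀ ℤ) :
    divDeg (f + g) = divDeg f + divDeg g :=
  Finsupp.sum_add_index' (fun _ => rfl) (fun _ _ _ => rfl)

lemma divDeg_single {L : Type*} [CommGroup L] (a : L) (c : ℤ) :
    divDeg (Finsupp.single a c) = c :=
  Finsupp.sum_single_index rfl

lemma divDeg_neg {L : Type*} [CommGroup L] (f : L →₀ ℤ) :
    divDeg (-f) = - divDeg f := by
  have := divDeg_add f (-f)
  simp only [add_neg_cancel] at this
  have h0 : divDeg (0 : L →₀ ℤ) = 0 := by simp [divDeg]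
  omega

lemma divDeg_sub {L : Type*} [CommGroup L] (f g : L →₀ ℤ) :
    divDeg (f - g) = divDeg f - divDeg g := by
  rw [sub_eq_add_neg, divDeg_add, divDeg_neg]; ring

lemma divDeg_mapDomain {L : Type*} [CommGroup L] (h : L → L) (f : L →₀ ℤ) :
    divDeg (Finsupp.mapDomain h f) = divDeg f := by
  unfold divDeg
  rw [Finsupp.sum_mapDomain_index (fun _ => rfl) (fun _ _ _ => rfl)]

lemma divDeg_katz {L : Type*} [CommGroup L] {n : ℕ} (β : Convoluter L n)
    (g : Fin n → (L →₀ ℤ)) (r : ℤ) (i : Fin n) :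
    divDeg (katz β g r i) = divDeg (g i) + defect β g r := by
  unfold katz
  rw [divDeg_add, divDeg_sub, divDeg_single, divDeg_single, divDeg_mapDomain]
  ring

lemma katz_eval {L : Type*} [CommGroup L] {n : ℕ} (β : Convoluter L n)
    (g : Fin n → (L →₀ ℤ)) (r : ℤ) (i : Fin n)
    (hβT : β.T ≠ 1)
    (hβconv : ∀ α ∈ (g i).support, α * β.H i * β.T ≠ 1) :
    (katz β g r i) (β.V i) = g i (β.H i)⁻¹ + defect β g r := by
  unfold katz
  rw [Finsupp.add_apply, Finsupp.sub_apply]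
  have h1 : (Finsupp.single (β.V i) (g i (β.H i)⁻¹ + defect β g r)) (β.V i)
      = g i (β.H i)⁻¹ + defect β g r := Finsupp.single_eq_same
  have h2 : (Finsupp.single (β.V i * β.T) (g i (β.H i)⁻¹)) (β.V i) = 0 := by
    apply Finsupp.single_eq_of_ne'
    intro h
    apply hβT
    exact mul_left_cancel (h.trans (mul_one (β.V i)).symm)
  have hinj : Function.Injective (fun α : L => α * β.U i) :=
    fun a b hab => mul_right_cancel hab
  set α₀ : L := β.V i * (β.U i)⁻¹ with hα₀
  have hVi : β.V i = α₀ * β.U i := by rw [hα₀, inv_mul_cancel_right]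
  have h3 : (Finsupp.mapDomain (fun α => α * β.U i) (g i)) (β.V i) = 0 := by
    rw [hVi, Finsupp.mapDomain_apply hinj]
    by_contra h
    have hmem : α₀ ∈ (g i).support := Finsupp.mem_support_iff.mpr h
    apply hβconv α₀ hmem
    simp [hα₀, β.relU i, mul_inv, mul_comm, mul_assoc, mul_left_comm]
  rw [h1, h2, h3]
  ring

/-- The defect of the inverse pair is the negative of the original defect:
`δ(c*β*, κ(β,g)) = -δ(β,g)`; consequently the rank of `κ(c*β*, κ(β,g))` equals `r`. -/
theorem katz_inverse_defect {L : Type*} [CommGroup L] {n : ℕ} (r : ℤ)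
    (g : Fin n → (L →₀ ℤ)) (hg : ∀ i, divDeg (g i) = r) (β : Convoluter L n)
    (hβT : β.T ≠ 1)
    (hβconv : ∀ i, ∀ α ∈ (g i).support, α * β.H i * β.T ≠ 1) :
    defect β.star (katz β g r) (r + defect β g r) = - defect β g r ∧
    ∀ i, divDeg (katz β.star (katz β g r) (r + defect β g r) i) = r := by
  set δ := defect β g r with hδ
  have hstarH : ∀ i, ((Convoluter.star β).H i)⁻¹ = β.V i := by
    intro i; simp [Convoluter.star]
  have heval : ∀ i, (katz β g r i) (((Convoluter.star β).H i)⁻¹)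
      = g i (β.H i)⁻¹ + δ := by
    intro i
    rw [hstarH i]
    exact katz_eval β g r i hβT (hβconv i)
  have hsum : ∑ i, g i (β.H i)⁻¹ = ((n : ℤ) - 2) * r - δ := by
    rw [hδ]; unfold defect; ring
  have hdef : defect β.star (katz β g r) (r + δ) = -δ := by
    unfold defect
    rw [Finset.sum_congr rfl (fun i _ => heval i), Finset.sum_add_distrib,
      Finset.sum_const, hsum]
    simp [Finset.card_univ]
    ring
  refine ⟨hdef, fun i => ?_⟩
  rw [divDeg_katz, hdef, divDeg_katz, hg i]
  ring
end

section
/- Let r ≥ 1 and let m : ℝ → ℕ be a finitely supported function with Σ_α m(α) = r (a multiplicity function of total degree r). An arrangement of m is a function a : ZMod r → ℝ taking each value α exactly m(α) times; a descent of a is an index t ∈ ZMod r with a(t) ≥ a(t+1). Then the minimum, over all arrangements a of m, of the number of descents of a equals the maximal multiplicity max_α m(α). In particular, every arrangement has at least max_α m(α) descents, and some arrangement has exactly that many. -/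
open Finset

/-- An arrangement of a multiplicity function `m : ℝ →₀ ℕ` of total mass `r` is a function
`a : ZMod r → ℝ` taking each value `α` exactly `m α` times. -/
def IsArrangement (r : ℕ) [NeZero r] (m : ℝ →₀ ℕ) (a : ZMod r → ℝ) : Prop :=
  ∀ α : ℝ, (Finset.univ.filter fun t => a t = α).card = m α

/-- The number of descents of an arrangement: indices `t` (cyclic mod `r`) with
`a t ≥ a (t+1)`. -/
noncomputable def descents (r : ℕ) [NeZero r] (a : ZMod r → ℝ) : ℕ :=
  (Finset.univ.filter fun t : ZMod r => a (t + 1) ≤ a t).card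

private lemma arr_card_le_descents (r : ℕ) [NeZero r] (a : ZMod r → ℝ) (α : ℝ) :
    (Finset.univ.filter fun t : ZMod r => a t = α).card ≤ descents r a := by
  classical
  have hr : 0 < r := Nat.pos_of_ne_zero (NeZero.ne r)
  have hex : ∀ t : ZMod r, ∃ k : ℕ, a (t + (k : ZMod r) + 1) ≤ a (t + (k : ZMod r)) := by
    intro t
    by_contra h
    push_neg at h
    have hsm : StrictMono fun k : ℕ => a (t + (k : ZMod r)) :=
      strictMono_nat_of_lt_succ fun k => by
        have h1 := h k
        push_cast
        rw [← add_assoc]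
        exact h1
    have h2 : a (t + ((0:ℕ) : ZMod r)) < a (t + ((r:ℕ) : ZMod r)) := hsm hr
    rw [ZMod.natCast_self] at h2
    simp at h2
  set K : ZMod r → ℕ := fun t => Nat.find (hex t) with hK
  have hspec : ∀ t, a (t + (K t : ZMod r) + 1) ≤ a (t + (K t : ZMod r)) := fun t =>
    Nat.find_spec (hex t)
  have hmin : ∀ t (j : ℕ), j < K t → a (t + (j : ZMod r)) < a (t + (j : ZMod r) + 1) := by
    intro t j hj
    exact lt_of_not_ge (Nat.find_min (hex t) hj)
  have key : ∀ t t' : ZMod r, a t = a t' → K t ≤ K t' →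
      t + (K t : ZMod r) = t' + (K t' : ZMod r) → t = t' := by
    intro t t' hval hkk heq
    have claim : ∀ j : ℕ, j ≤ K t' → 1 ≤ j → a t' < a (t' + (j : ZMod r)) := by
      intro j
      induction j with
      | zero => intro _ h; omega
      | succ j ih =>
        intro hj _
        rcases Nat.eq_zero_or_pos j with h0 | h1
        · subst h0
          have h2 := hmin t' 0 (by omega)
          simpa using h2
        · have h3 := ih (by omega) h1
          have h4 := hmin t' j (by omega)
          have h5 : t' + ((j+1 : ℕ) : ZMod r) = t' + (j : ZMod r) + 1 := by push_cast; ring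
          rw [h5]
          linarith
    rcases Nat.eq_or_lt_of_le hkk with he | hlt
    · rw [he] at heq; exact add_right_cancel heq
    · exfalso
      have h5 : a t' < a (t' + ((K t' - K t : ℕ) : ZMod r)) := claim _ (by omega) (by omega)
      have h6 : t' + ((K t' - K t : ℕ) : ZMod r) = t := by
        rw [Nat.cast_sub hkk]
        linear_combination -heq
      rw [h6, ← hval] at h5
      exact lt_irrefl _ h5
  apply Finset.card_le_card_of_injOn (fun t => t + (K t : ZMod r))
  · intro t _
    simp only [descents, Finset.mem_filter, Finset.mem_univ, true_and]
    exact Finset.mem_coe.mpr (Finset.mem_filter.mpr ⟨Finset.mem_univ _, hspec t⟩)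
  · intro t ht t' ht' heq
    simp only [Finset.coe_filter, Set.mem_setOf_eq, Finset.mem_univ, true_and] at ht ht'
    have hval : a t = a t' := by rw [ht, ht']
    rcases le_total (K t) (K t') with h | h
    · exact key t t' hval h heq
    · exact (key t' t hval.symm h heq.symm).symm
private lemma sum_sub_telescope (g : ℕ → ℕ) (hg : Monotone g) (n : ℕ) :
    ∑ p ∈ Finset.range n, (g (p+1) - g p) = g n - g 0 := by
  induction n with
  | zero => simp
  | succ n ih =>
    rw [Finset.sum_range_succ, ih]
    have h1 : g 0 ≤ g n := hg (Nat.zero_le n)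
    have h2 : g n ≤ g (n+1) := hg (Nat.le_succ n)
    omega

private lemma exists_good_arrangement (r : ℕ) [NeZero r] (hr : 1 ≤ r) (m : ℝ →₀ ℕ)
    (hmass : (m.sum fun _ k => k) = r) :
    ∃ a : ZMod r → ℝ,
      (∀ α : ℝ, (Finset.univ.filter fun t => a t = α).card = m α) ∧
      descents r a = m.support.sup m := by
  classical
  have hr0 : 0 < r := by omega
  have hrtop : r - 1 < r := by omega
  set M := m.support.sup m with hM
  have hsupp : m.support.Nonempty := by
    rcases Finset.eq_empty_or_nonempty m.support with h | h
    · exfalso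
      rw [Finsupp.sum, h, Finset.sum_empty] at hmass
      omega
    · exact h
  obtain ⟨α₀, hα₀s, hα₀⟩ := m.support.exists_mem_eq_sup hsupp m
  have hM1 : 1 ≤ M := by
    have h := Finsupp.mem_support_iff.mp hα₀s
    omega
  have hle : ∀ α ∈ m.support, m α ≤ M := fun α hα => Finset.le_sup hα
  have lex_lt : ∀ (j j' : ℕ) (b b' : ℝ),
      (toLex (j, b) < toLex (j', b') ↔ j < j' ∨ j = j' ∧ b < b') :=
    fun j j' b b' => Prod.Lex.lt_iff
  have lex_le : ∀ (j j' : ℕ) (b b' : ℝ),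
      (toLex (j, b) ≤ toLex (j', b') ↔ j < j' ∨ j = j' ∧ b ≤ b') :=
    fun j j' b b' => Prod.Lex.le_iff
  set T : Finset (ℕ ×ₗ ℝ) :=
    m.support.biUnion (fun α => (Finset.range (m α)).image fun j => toLex (j, α)) with hTdef
  have hmemT : ∀ x : ℕ ×ₗ ℝ, x ∈ T ↔ (ofLex x).1 < m (ofLex x).2 := by
    intro x
    simp only [hTdef, Finset.mem_biUnion, Finset.mem_image, Finset.mem_range,
      Finsupp.mem_support_iff]
    constructor
    · rintro ⟨α, hα, j, hj, rfl⟩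
      exact hj
    · intro h
      exact ⟨(ofLex x).2, by omega, (ofLex x).1, h, rfl⟩
  have hinj : ∀ α : ℝ, Function.Injective fun j : ℕ => toLex (j, α) := by
    intro α j j' h
    have h2 := congrArg (fun x => (ofLex x).1) h
    simpa using h2
  have hTcard : T.card = r := by
    rw [hTdef, Finset.card_biUnion]
    · rw [← hmass, Finsupp.sum]
      apply Finset.sum_congr rfl
      intro α hα
      rw [Finset.card_image_of_injective _ (hinj α), Finset.card_range]
    · intro α hα β hβ hne
      apply Finset.disjoint_left.mpr
      rintro x hx hx'
      simp only [Finset.mem_image, Finset.mem_range] at hx hx'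
      obtain ⟨j, _, rfl⟩ := hx
      obtain ⟨j', _, h⟩ := hx'
      have h2 := congrArg (fun x => (ofLex x).2) h
      exact hne h2.symm
  set e := T.orderIsoOfFin hTcard with he
  set E : Fin r → ℕ ×ₗ ℝ := fun p => (e p : ℕ ×ₗ ℝ) with hE
  set c : Fin r → ℕ := fun p => (ofLex (E p)).1 with hc
  set A : Fin r → ℝ := fun p => (ofLex (E p)).2 with hA
  have hEeq : ∀ p, E p = toLex (c p, A p) := fun p => rfl
  have hET : ∀ p, E p ∈ T := fun p => (e p).2
  have hcm : ∀ p, c p < m (A p) := fun p => (hmemT _).mp (hET p)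
  have hmono : StrictMono E := fun p q h => Subtype.coe_lt_coe.mpr (e.lt_iff_lt.mpr h)
  have hsurj : ∀ x ∈ T, ∃ p, E p = x := by
    intro x hx
    obtain ⟨p, hp⟩ := e.surjective ⟨x, hx⟩
    exact ⟨p, congrArg Subtype.val hp⟩
  have hcmono : ∀ p q : Fin r, p ≤ q → c p ≤ c q := by
    intro p q hpq
    rcases eq_or_lt_of_le hpq with h | h
    · rw [h]
    · have h2 := hmono h
      rw [hEeq p, hEeq q, lex_lt] at h2
      rcases h2 with h2 | ⟨h2, _⟩
      · exact le_of_lt h2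
      · exact le_of_eq h2
  have hAsupp : ∀ p, A p ∈ m.support := fun p =>
    Finsupp.mem_support_iff.mpr (by have := hcm p; omega)
  have hcM : ∀ p, c p < M := fun p => lt_of_lt_of_le (hcm p) (hle _ (hAsupp p))
  have hAc : ∀ (x y : ℕ) (hx : x < r) (hy : y < r), x = y → A ⟨x, hx⟩ = A ⟨y, hy⟩ := by
    rintro x y hx hy rfl; rfl
  have hcc : ∀ (x y : ℕ) (hx : x < r) (hy : y < r), x = y → c ⟨x, hx⟩ = c ⟨y, hy⟩ := by
    rintro x y hx hy rfl; rfl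
  have hp0le : ∀ q : Fin r, (⟨0, hr0⟩ : Fin r) ≤ q := fun q => by
    rw [Fin.le_def]; exact Nat.zero_le _
  have hptople : ∀ q : Fin r, q ≤ (⟨r-1, hrtop⟩ : Fin r) := fun q => by
    rw [Fin.le_def]
    have := q.isLt
    show q.val ≤ r - 1
    omega
  have hc0 : c ⟨0, hr0⟩ = 0 := by
    obtain ⟨q, hq⟩ := hsurj (toLex (0, α₀)) ((hmemT _).mpr (by show 0 < m α₀; omega))
    have h1 : E ⟨0, hr0⟩ ≤ E q := hmono.monotone (hp0le q)
    rw [hq, hEeq, lex_le] at h1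
    rcases h1 with h1 | ⟨h1, _⟩
    · omega
    · exact h1
  have hctop : c ⟨r-1, hrtop⟩ = M - 1 := by
    obtain ⟨q, hq⟩ := hsurj (toLex (M-1, α₀)) ((hmemT _).mpr (by show M - 1 < m α₀; omega))
    have h1 : E q ≤ E ⟨r-1, hrtop⟩ := hmono.monotone (hptople q)
    rw [hq, hEeq, lex_le] at h1
    have h2 := hcM ⟨r-1, hrtop⟩
    rcases h1 with h1 | ⟨h1, _⟩ <;> omega
  have hstep : ∀ (p : ℕ) (hp : p + 1 < r),
      c ⟨p+1, hp⟩ ≤ c ⟨p, Nat.lt_of_succ_lt hp⟩ + 1 := by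
    intro p hp
    by_contra hcon
    push_neg at hcon
    have hqM := hcM ⟨p+1, hp⟩
    obtain ⟨u, hu⟩ := hsurj (toLex (c ⟨p, Nat.lt_of_succ_lt hp⟩ + 1, α₀))
      ((hmemT _).mpr (by show c ⟨p, Nat.lt_of_succ_lt hp⟩ + 1 < m α₀; omega))
    have h1 : (⟨p, Nat.lt_of_succ_lt hp⟩ : Fin r) < u := by
      apply hmono.lt_iff_lt.mp
      rw [hu, hEeq, lex_lt]
      left; omega
    have h2 : u < (⟨p+1, hp⟩ : Fin r) := by
      apply hmono.lt_iff_lt.mp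
      rw [hu, hEeq, lex_lt]
      left; omega
    rw [Fin.lt_def] at h1 h2
    have h1' : p < u.val := h1
    have h2' : u.val < p + 1 := h2
    omega
  have hdesc : ∀ (p : ℕ) (hp : p + 1 < r),
      (A ⟨p+1, hp⟩ ≤ A ⟨p, Nat.lt_of_succ_lt hp⟩ ↔
        c ⟨p+1, hp⟩ = c ⟨p, Nat.lt_of_succ_lt hp⟩ + 1) := by
    intro p hp
    have hmle : c ⟨p, Nat.lt_of_succ_lt hp⟩ ≤ c ⟨p+1, hp⟩ :=
      hcmono _ _ (by rw [Fin.le_def]; exact Nat.le_succ p)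
    have hsl := hstep p hp
    constructor
    · intro hAle
      by_contra hne
      have hceq : c ⟨p+1, hp⟩ = c ⟨p, Nat.lt_of_succ_lt hp⟩ := by omega
      have h2 : E ⟨p, Nat.lt_of_succ_lt hp⟩ < E ⟨p+1, hp⟩ :=
        hmono (by rw [Fin.lt_def]; exact Nat.lt_succ_self p)
      rw [hEeq, hEeq, lex_lt] at h2
      rcases h2 with h2 | ⟨_, h2⟩
      · omega
      · linarith
    · intro hjump
      have hx : toLex (c ⟨p, Nat.lt_of_succ_lt hp⟩, A ⟨p+1, hp⟩) ∈ T := by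
        rw [hmemT]
        show c ⟨p, Nat.lt_of_succ_lt hp⟩ < m (A ⟨p+1, hp⟩)
        have h4 := hcm ⟨p+1, hp⟩
        omega
      obtain ⟨u, hu⟩ := hsurj _ hx
      have hup : u ≤ ⟨p, Nat.lt_of_succ_lt hp⟩ := by
        by_contra hup
        push_neg at hup
        have h2 : (⟨p+1, hp⟩ : Fin r) ≤ u := by
          rw [Fin.le_def]
          rw [Fin.lt_def] at hup
          exact hup
        have h3 := hmono.monotone h2
        rw [hu, hEeq, lex_le] at h3
        rcases h3 with h3 | ⟨h3, _⟩ <;> omega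
      have h3 := hmono.monotone hup
      rw [hu, hEeq, lex_le] at h3
      rcases h3 with h3 | ⟨_, h3⟩
      · omega
      · exact h3
  have hwrap : A ⟨0, hr0⟩ ≤ A ⟨r-1, hrtop⟩ := by
    have hx : toLex (0, A ⟨r-1, hrtop⟩) ∈ T := by
      rw [hmemT]
      show 0 < m (A ⟨r-1, hrtop⟩)
      have h4 := hcm ⟨r-1, hrtop⟩
      omega
    obtain ⟨u, hu⟩ := hsurj _ hx
    have h1 : E ⟨0, hr0⟩ ≤ E u := hmono.monotone (hp0le u)
    rw [hu, hEeq, lex_le] at h1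
    rcases h1 with h1 | ⟨_, h1⟩
    · omega
    · exact h1
  set a : ZMod r → ℝ := fun t => A ⟨t.val, ZMod.val_lt t⟩ with ha
  refine ⟨a, ?_, ?_⟩
  · -- arrangement property
    intro α
    have hfil : (T.filter fun x => (ofLex x).2 = α).card = m α := by
      have hfe : T.filter (fun x => (ofLex x).2 = α) =
          (Finset.range (m α)).image fun j => toLex (j, α) := by
        ext x
        simp only [Finset.mem_filter, hmemT, Finset.mem_image, Finset.mem_range]
        constructor
        · rintro ⟨h1, h2⟩
          refine ⟨(ofLex x).1, by rw [h2] at h1; exact h1, ?_⟩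
          rw [← h2]
          rfl
        · rintro ⟨j, hj, rfl⟩
          exact ⟨hj, rfl⟩
      rw [hfe, Finset.card_image_of_injective _ (hinj α), Finset.card_range]
    rw [← hfil]
    apply Finset.card_bij (fun t _ => E ⟨t.val, ZMod.val_lt t⟩)
    · intro t ht
      simp only [Finset.mem_filter, Finset.mem_univ, true_and] at ht ⊢
      exact ⟨hET _, ht⟩
    · intro t _ t' _ h
      have h2 : (⟨t.val, ZMod.val_lt t⟩ : Fin r) = ⟨t'.val, ZMod.val_lt t'⟩ :=
        hmono.injective h
      have h3 : t.val = t'.val := congrArg Fin.val h2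
      exact ZMod.val_injective r h3
    · intro x hx
      rw [Finset.mem_filter] at hx
      obtain ⟨u, hu⟩ := hsurj x hx.1
      have hvu : ((u.val : ℕ) : ZMod r).val = u.val := ZMod.val_natCast_of_lt u.isLt
      have hfu : (⟨((u.val : ℕ) : ZMod r).val, ZMod.val_lt _⟩ : Fin r) = u := Fin.ext hvu
      refine ⟨((u.val : ℕ) : ZMod r), Finset.mem_filter.mpr ⟨Finset.mem_univ _, ?_⟩, ?_⟩
      · show A ⟨((u.val : ℕ) : ZMod r).val, ZMod.val_lt _⟩ = α
        rw [hfu]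
        show (ofLex (E u)).2 = α
        rw [hu]
        exact hx.2
      · show E ⟨((u.val : ℕ) : ZMod r).val, ZMod.val_lt _⟩ = x
        rw [hfu]
        exact hu
  · -- number of descents
    have h1 : descents r a =
        ((Finset.range r).filter fun p : ℕ => a ((p : ZMod r) + 1) ≤ a ((p : ZMod r))).card := by
      unfold descents
      apply Finset.card_bij' (fun t _ => t.val) (fun p _ => ((p : ℕ) : ZMod r))
      · intro t ht
        rw [Finset.mem_filter] at ht ⊢
        refine ⟨Finset.mem_range.mpr (ZMod.val_lt t), ?_⟩
        rw [ZMod.natCast_rightInverse t]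
        exact ht.2
      · intro p hp
        rw [Finset.mem_filter] at hp
        exact Finset.mem_filter.mpr ⟨Finset.mem_univ _, hp.2⟩
      · intro t _
        exact ZMod.natCast_rightInverse t
      · intro p hp
        rw [Finset.mem_filter, Finset.mem_range] at hp
        exact ZMod.val_natCast_of_lt hp.1
    have hrange : Finset.range r = insert (r-1) (Finset.range (r-1)) := by
      have h2 : r - 1 + 1 = r := by omega
      rw [← h2, Finset.range_add_one, h2]
    have hwrapP : a (((r-1 : ℕ) : ZMod r) + 1) ≤ a ((r-1 : ℕ) : ZMod r) := by
      have e1 : ((r-1 : ℕ) : ZMod r) + 1 = 0 := by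
        have e2 : ((r-1 : ℕ) : ZMod r) + 1 = ((r-1+1 : ℕ) : ZMod r) := by push_cast; ring
        have e3 : r - 1 + 1 = r := by omega
        rw [e2, e3, ZMod.natCast_self]
      rw [e1]
      show A ⟨(0 : ZMod r).val, ZMod.val_lt _⟩ ≤ A ⟨((r-1 : ℕ) : ZMod r).val, ZMod.val_lt _⟩
      rw [hAc (0 : ZMod r).val 0 (ZMod.val_lt 0) hr0 ZMod.val_zero,
        hAc ((r-1 : ℕ) : ZMod r).val (r-1) (ZMod.val_lt _) hrtop
          (ZMod.val_natCast_of_lt hrtop)]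
      exact hwrap
    set g : ℕ → ℕ :=
      fun p => c ⟨min p (r-1), Nat.lt_of_le_of_lt (Nat.min_le_right _ _) hrtop⟩ with hg
    have hgm : Monotone g := fun p q hpq =>
      hcmono _ _ (by rw [Fin.le_def]; exact min_le_min hpq le_rfl)
    have hgc : ∀ (p : ℕ) (hp : p < r), g p = c ⟨p, hp⟩ := fun p hp =>
      hcc (min p (r-1)) p (Nat.lt_of_le_of_lt (Nat.min_le_right _ _) hrtop) hp
        (Nat.min_eq_left (by omega))
    have hpoint : ∀ p ∈ Finset.range (r-1),
        (if a ((p : ZMod r) + 1) ≤ a ((p : ZMod r)) then 1 else 0) = g (p+1) - g p := by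
      intro p hp
      rw [Finset.mem_range] at hp
      have hp1 : p + 1 < r := by omega
      have hP : (a ((p : ZMod r) + 1) ≤ a ((p : ZMod r))) ↔
          (c ⟨p+1, hp1⟩ = c ⟨p, Nat.lt_of_succ_lt hp1⟩ + 1) := by
        have e2 : ((p : ZMod r) + 1) = ((p+1 : ℕ) : ZMod r) := by push_cast; ring
        rw [e2]
        show (A ⟨((p+1 : ℕ) : ZMod r).val, ZMod.val_lt _⟩ ≤
          A ⟨((p : ℕ) : ZMod r).val, ZMod.val_lt _⟩) ↔ _
        rw [hAc ((p+1 : ℕ) : ZMod r).val (p+1) (ZMod.val_lt _) hp1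
            (ZMod.val_natCast_of_lt hp1),
          hAc ((p : ℕ) : ZMod r).val p (ZMod.val_lt _) (Nat.lt_of_succ_lt hp1)
            (ZMod.val_natCast_of_lt (Nat.lt_of_succ_lt hp1))]
        exact hdesc p hp1
      rw [hgc (p+1) hp1, hgc p (Nat.lt_of_succ_lt hp1), if_congr hP rfl rfl]
      have h4 := hcmono ⟨p, Nat.lt_of_succ_lt hp1⟩ ⟨p+1, hp1⟩
        (by rw [Fin.le_def]; exact Nat.le_succ p)
      have h5 := hstep p hp1
      by_cases h6 : c ⟨p+1, hp1⟩ = c ⟨p, Nat.lt_of_succ_lt hp1⟩ + 1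
      · rw [if_pos h6]; omega
      · rw [if_neg h6]; omega
    have hmain : ((Finset.range (r-1)).filter
        fun p : ℕ => a ((p : ZMod r) + 1) ≤ a ((p : ZMod r))).card = M - 1 := by
      rw [Finset.card_filter, Finset.sum_congr rfl hpoint, sum_sub_telescope g hgm (r-1),
        hgc (r-1) hrtop, hgc 0 hr0, hctop, hc0]
      omega
    rw [h1, hrange, Finset.filter_insert, if_pos hwrapP,
      Finset.card_insert_of_notMem (by simp), hmain]
    omega

/-- The minimal number of descents over all arrangements of `m` equals the maximal
multiplicity `max_α m(α)`: every arrangement has at least that many descents, and some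
arrangement achieves it. -/
theorem min_descents_eq_max_multiplicity (r : ℕ) [NeZero r] (hr : 1 ≤ r) (m : ℝ →₀ ℕ)
    (hmass : (m.sum fun _ k => k) = r) :
    (∀ a : ZMod r → ℝ, IsArrangement r m a → m.support.sup m ≤ descents r a) ∧
    (∃ a : ZMod r → ℝ, IsArrangement r m a ∧ descents r a = m.support.sup m) := by
  constructor
  · intro a ha
    apply Finset.sup_le
    intro α hα
    rw [← ha α]
    exact arr_card_le_descents r a α
  · obtain ⟨a, h1, h2⟩ := exists_good_arrangement r hr m hmass
    exact ⟨a, h1, h2⟩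
end

section
/- Let r ≥ 1 and let m : ℝ → ℕ be finitely supported with support in [0,1), total mass r, and maximal multiplicity p := max_α m(α). Suppose there exists α' in the support of m with m(α') < p. Then for every residue class c ∈ ℤ/rℤ there exists a good arrangement a : ZMod r → ℝ of m (an arrangement with exactly p descents), whose descent positions, listed as t_1 < t_2 < ⋯ < t_p in {1,…,r}, satisfy t_1 + t_2 + ⋯ + t_p ≡ c (mod r). -/
open Finset

namespace GoodArr

def cuts : List (List ℝ) → List ℕ
  | [] => []
  | b :: t => b.length :: (cuts t).map (b.length + ·)


lemma mem_cuts_pos {bs : List (List ℝ)} (hne : ∀ b ∈ bs, b ≠ []) {x : ℕ}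
    (hx : x ∈ cuts bs) : 0 < x := by
  induction bs generalizing x with
  | nil => simp [cuts] at hx
  | cons b t ih =>
    simp only [cuts, List.mem_cons, List.mem_map] at hx
    rcases hx with h | ⟨y, hy, rfl⟩
    · subst h; exact List.length_pos_iff.2 (hne b (by simp))
    · have := ih (fun b hb => hne b (by simp [hb])) hy
      omega

lemma mem_cuts_le {bs : List (List ℝ)} {x : ℕ} (hx : x ∈ cuts bs) :
    x ≤ (bs.flatMap id).length := by
  induction bs generalizing x with
  | nil => simp [cuts] at hx
  | cons b t ih =>
    simp only [cuts, List.mem_cons, List.mem_map] at hx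
    simp only [List.flatMap_cons, List.length_append, id]
    rcases hx with h | ⟨y, hy, rfl⟩
    · omega
    · have := ih hy; omega

/-- within blocks: strictly increasing -/
lemma flat_lt {bs : List (List ℝ)} (hs : ∀ b ∈ bs, b.Pairwise (· < ·)) (i : ℕ)
    (hi : i + 1 < (bs.flatMap id).length) (hcut : (i+1) ∉ cuts bs) :
    (bs.flatMap id).getD i 0 < (bs.flatMap id).getD (i+1) 0 := by
  induction bs generalizing i with
  | nil => simp at hi
  | cons b t ih =>
    simp only [List.flatMap_cons, id] at hi ⊢
    rcases lt_trichotomy (i+1) b.length with h | h | h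
    · rw [List.getD_append _ _ _ _ (by omega), List.getD_append _ _ _ _ h]
      rw [List.getD_eq_getElem _ _ (by omega), List.getD_eq_getElem _ _ h]
      exact List.pairwise_iff_get.1 (hs b (by simp)) ⟨i, by omega⟩ ⟨i+1, h⟩ (by simp)
    · exact absurd (by simp [cuts, h]) hcut
    · rw [List.getD_append_right _ _ _ _ (by omega), List.getD_append_right _ _ _ _ (by omega)]
      have hlen : i + 1 - b.length = (i - b.length) + 1 := by omega
      rw [hlen]
      refine ih (fun b hb => hs b (by simp [hb])) _ ?_ ?_
      · simp only [List.length_append] at hi; omega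
      · intro hmem
        refine hcut ?_
        simp only [cuts, List.mem_cons, List.mem_map]
        exact Or.inr ⟨i - b.length + 1, hmem, by omega⟩

/-- the element just before a cut is ≥ β, if β is in every block -/
lemma flat_ge_beta {β : ℝ} {bs : List (List ℝ)}
    (h : ∀ b ∈ bs, β ∈ b ∧ b.Pairwise (· < ·)) (i : ℕ) (hx : i + 1 ∈ cuts bs) :
    β ≤ (bs.flatMap id).getD i 0 := by
  induction bs generalizing i with
  | nil => simp [cuts] at hx
  | cons b t ih =>
    simp only [cuts, List.mem_cons, List.mem_map] at hx
    simp only [List.flatMap_cons, id]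
    obtain ⟨hβ, hsort⟩ := h b (by simp)
    rcases hx with hc | ⟨y, hy, hxy⟩
    · rw [List.getD_append _ _ _ _ (by omega), List.getD_eq_getElem _ _ (by omega)]
      obtain ⟨j, hj, rfl⟩ := List.mem_iff_get.1 hβ
      rcases eq_or_lt_of_le (Nat.le_of_lt_succ (by omega : (j : ℕ) < i + 1)) with he | hl
      · simp [List.get_eq_getElem, he]
      · exact le_of_lt (List.pairwise_iff_get.1 hsort j ⟨i, by omega⟩ hl)
    · have hypos : 0 < y := mem_cuts_pos (fun b hb => ((h b (by simp [hb])).1 |> List.ne_nil_of_mem)) hy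
      rw [List.getD_append_right _ _ _ _ (by omega)]
      have he : i - b.length + 1 = y := by omega
      exact ih (fun b hb => h b (by simp [hb])) _ (he ▸ hy)

/-- the element at a cut (or position 0) is ≤ β -/
lemma flat_le_beta {β : ℝ} {bs : List (List ℝ)}
    (h : ∀ b ∈ bs, β ∈ b ∧ b.Pairwise (· < ·)) (i : ℕ)
    (hx : i = 0 ∨ i ∈ cuts bs) (hi : i < (bs.flatMap id).length) :
    (bs.flatMap id).getD i 0 ≤ β := by
  induction bs generalizing i with
  | nil => simp at hi
  | cons b t ih =>
    simp only [List.flatMap_cons, id] at hi ⊢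
    obtain ⟨hβ, hsort⟩ := h b (by simp)
    have hbp : 0 < b.length := List.length_pos_iff.2 (List.ne_nil_of_mem hβ)
    rcases hx with rfl | hc
    · rw [List.getD_append _ _ _ _ hbp, List.getD_eq_getElem _ _ hbp]
      obtain ⟨j, hj, rfl⟩ := List.mem_iff_get.1 hβ
      rcases Nat.eq_zero_or_pos j with he | hl
      · simp [List.get_eq_getElem, ← he]
      · exact le_of_lt (List.pairwise_iff_get.1 hsort ⟨0, by omega⟩ j hl)
    · simp only [cuts, List.mem_cons, List.mem_map] at hc
      rcases hc with rfl | ⟨y, hy, rfl⟩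
      · rw [List.getD_append_right _ _ _ _ (le_refl _), Nat.sub_self]
        refine ih (fun b hb => h b (by simp [hb])) 0 (Or.inl rfl) ?_
        simp only [List.length_append] at hi; omega
      · rw [List.getD_append_right _ _ _ _ (by omega), Nat.add_sub_cancel_left]
        refine ih (fun b hb => h b (by simp [hb])) y (Or.inr hy) ?_
        simp only [List.length_append] at hi; omega

lemma mem_cuts_iff {bs : List (List ℝ)} {x : ℕ} :
    x ∈ cuts bs ↔ ∃ n < bs.length, x = ((bs.take (n+1)).map List.length).sum := by
  induction bs generalizing x with
  | nil => simp [cuts]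
  | cons b t ih =>
    simp only [cuts, List.mem_cons, List.mem_map, ih]
    constructor
    · rintro (rfl | ⟨y, ⟨n, hn, rfl⟩, rfl⟩)
      · exact ⟨0, by simp⟩
      · exact ⟨n+1, by simpa using hn, by simp [List.take_cons]⟩
    · rintro ⟨n, hn, rfl⟩
      cases n with
      | zero => left; simp
      | succ n => right; exact ⟨_, ⟨n, by simpa using hn, rfl⟩, by simp [List.take_cons]⟩


end GoodArr



lemma card_filter_range_getD (L : List ℝ) (α : ℝ) :
    ((Finset.range L.length).filter fun i => L.getD i 0 = α).card = L.count α := by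
  induction L with
  | nil => simp
  | cons x tl ih =>
    rw [Finset.card_filter, List.length_cons, Finset.sum_range_succ']
    rw [Finset.card_filter] at ih
    simp only [List.getD_cons_succ, List.getD_cons_zero, List.count_cons, ih, beq_iff_eq]

lemma length_sort_filter (s : Finset ℝ) (P : ℝ → Prop) [DecidablePred P] :
    ((s.sort (· ≤ ·)).filter (fun α => decide (P α))).length = ∑ α ∈ s, if P α then 1 else 0 := by
  rw [← List.countP_eq_length_filter, (Finset.sort_perm_toList s _).countP_eq]
  have h1 : (s.filter P).card = Multiset.card (Multiset.filter P s.val) :=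
    congrArg Multiset.card (Finset.filter_val P s)
  rw [← Finset.card_filter, h1, ← Multiset.countP_eq_card_filter]
  have h2 : (s.val : Multiset ℝ) = ((s.toList : List ℝ) : Multiset ℝ) := by simp
  rw [h2, Multiset.coe_countP]

lemma bezout_step (r : ℕ) [NeZero r] (p : ℕ) (hp : 0 < p) (y : ZMod r) :
    ∃ s : ℕ, s < p ∧ ∃ k : ZMod r, (s : ZMod r) + p * k = y := by
  set d := Nat.gcd p r with hd
  have hd0 : 0 < d := Nat.gcd_pos_of_pos_left _ hp
  have hdp : d ≤ p := Nat.le_of_dvd hp (Nat.gcd_dvd_left _ _)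
  refine ⟨y.val % d, lt_of_lt_of_le (Nat.mod_lt _ hd0) hdp, ?_⟩
  set s := y.val % d with hs
  set w := y.val / d with hw
  have hyval : y.val = d * w + s := (Nat.div_add_mod _ _).symm
  have hdz : (d : ZMod r) = (p : ZMod r) * ((Nat.gcdA p r : ℤ) : ZMod r) := by
    have h := Nat.gcd_eq_gcd_ab p r
    have : ((d : ℤ) : ZMod r) = ((p * Nat.gcdA p r + r * Nat.gcdB p r : ℤ) : ZMod r) := by
      rw [← h]
    push_cast at this
    simpa [ZMod.natCast_self] using this
  refine ⟨((Nat.gcdA p r : ℤ) : ZMod r) * w, ?_⟩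
  have hy : ((y.val : ℕ) : ZMod r) = y := by
    simp [ZMod.natCast_val, ZMod.cast_id]
  calc (s : ZMod r) + (p : ZMod r) * (((Nat.gcdA p r : ℤ) : ZMod r) * w)
      = (s : ZMod r) + (d : ZMod r) * w := by rw [hdz]; ring
    _ = ((d * w + s : ℕ) : ZMod r) := by push_cast; ring
    _ = y := by rw [← hyval, hy]


/-- The set of descent positions of an arrangement: indices `t` (cyclic mod `r`) with
`a t ≥ a (t+1)`. -/
noncomputable def descentSet (r : ℕ) [NeZero r] (a : ZMod r → ℝ) : Finset (ZMod r) :=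
  Finset.univ.filter fun t : ZMod r => a (t + 1) ≤ a t

lemma isArrangement_rot (r : ℕ) [NeZero r] (m : ℝ →₀ ℕ) (a0 : ZMod r → ℝ)
    (h : IsArrangement r m a0) (k : ZMod r) : IsArrangement r m (fun t => a0 (t + k)) := by
  intro α
  rw [← h α]
  apply Finset.card_bij' (fun t _ => t + k) (fun t _ => t - k)
  · intro t ht; simp only [Finset.mem_filter, Finset.mem_univ, true_and] at ht ⊢; exact ht
  · intro t ht; simp only [Finset.mem_filter, Finset.mem_univ, true_and] at ht ⊢
    simpa [sub_add_cancel] using ht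
  · intro t _; simp
  · intro t _; simp

lemma descentSet_rot (r : ℕ) [NeZero r] (a0 : ZMod r → ℝ) (k : ZMod r) :
    descentSet r (fun t => a0 (t + k)) = (descentSet r a0).image (fun x => x - k) := by
  ext t
  simp only [descentSet, Finset.mem_image, Finset.mem_filter, Finset.mem_univ, true_and]
  constructor
  · intro h
    exact ⟨t + k, by convert h using 2 <;> ring, by ring⟩
  · rintro ⟨x, hx, rfl⟩
    convert hx using 2 <;> ring


/-- If `m` has support in `[0,1)`, total mass `r`, maximal multiplicity `p`, and some value
of `m` on its support is `< p`, then for every residue class `c` mod `r` there is a good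
arrangement of `m` (one with exactly `p` descents) whose descent positions sum to `c`
modulo `r`. -/
theorem good_arrangement_descent_sum (r : ℕ) [NeZero r] (hr : 1 ≤ r) (m : ℝ →₀ ℕ)
    (hsupp : ∀ α ∈ m.support, 0 ≤ α ∧ α < 1)
    (hmass : (m.sum fun _ k => k) = r)
    (p : ℕ) (hp : p = m.support.sup m)
    (hlt : ∃ α' ∈ m.support, m α' < p)
    (c : ZMod r) :
    ∃ a : ZMod r → ℝ, IsArrangement r m a ∧
      (descentSet r a).card = p ∧
      (∑ t ∈ descentSet r a, t) = c := by
  classical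
  obtain ⟨α', hα's, hqp⟩ := hlt
  set q := m α' with hqdef
  have hq1 : 1 ≤ q := Nat.one_le_iff_ne_zero.2 (Finsupp.mem_support_iff.1 hα's)
  have hsne : m.support.Nonempty := ⟨α', hα's⟩
  obtain ⟨β, hβs, hβp⟩ := Finset.exists_mem_eq_sup m.support hsne m
  rw [← hp] at hβp
  have hp1 : 1 ≤ p := lt_of_le_of_lt (Nat.zero_le q) hqp
  have hβα' : β ≠ α' := by intro h; rw [h, ← hqdef] at hβp; omega
  have hmle : ∀ α ∈ m.support, m α ≤ p := fun α hα => hp ▸ Finset.le_sup hα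
  have hmass' : (∑ α ∈ m.support, m α) = r := hmass
  -- numerical data
  set C0 : ℕ := ∑ α ∈ m.support.erase α',
      ∑ i ∈ (if α = β then Finset.range p else Finset.range (m α)), (p - i) with hC0
  set B : ℕ := ∑ i ∈ Finset.range q, (p - i) with hB
  obtain ⟨s, hsp, k, hsk⟩ := bezout_step r p hp1 ((C0 : ZMod r) + B - p - c)
  -- choice of the modified subset S for α'
  set w0 : ℕ := if s = 0 then q - 1 else q - min s q with hw0
  set u0 : ℕ := w0 + s with hu0
  have hw0q : w0 < q := by rw [hw0]; split_ifs <;> omega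
  have hu0p : u0 < p := by rw [hu0, hw0]; split_ifs <;> omega
  have hu0mem : u0 ∉ (Finset.range q).erase w0 := by
    simp only [Finset.mem_erase, Finset.mem_range, not_and_or, not_lt, not_not]
    rw [hu0, hw0]; split_ifs <;> omega
  set S : Finset ℕ := insert u0 ((Finset.range q).erase w0) with hS
  have hScard : S.card = q := by
    rw [hS, Finset.card_insert_of_notMem hu0mem,
      Finset.card_erase_of_mem (Finset.mem_range.2 hw0q), Finset.card_range]
    omega
  have hSsub : S ⊆ Finset.range p := by
    intro x hx
    rw [hS] at hx
    rcases Finset.mem_insert.1 hx with rfl | hx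
    · exact Finset.mem_range.2 hu0p
    · exact Finset.mem_range.2 (lt_trans (Finset.mem_range.1 (Finset.mem_of_mem_erase hx)) hqp)
  -- the runs
  set T : ℝ → Finset ℕ := fun α =>
    if α = α' then S else if α = β then Finset.range p else Finset.range (m α) with hT
  have hTβ : T β = Finset.range p := by rw [hT]; simp [hβα']
  have hTα' : T α' = S := by rw [hT]; simp
  have hTcard : ∀ α ∈ m.support, (T α).card = m α := by
    intro α hα
    simp only [hT]
    split_ifs with h1 h2
    · rw [h1, ← hqdef]; exact hScard
    · rw [h2, Finset.card_range, hβp]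
    · exact Finset.card_range _
  have hTsub : ∀ α, T α ⊆ Finset.range p := by
    intro α
    simp only [hT]
    split_ifs with h1 h2
    · exact hSsub
    · exact Finset.Subset.refl _
    · intro x hx
      rcases Finset.mem_range.1 hx with h
      by_cases hα : α ∈ m.support
      · exact Finset.mem_range.2 (lt_of_lt_of_le h (hmle α hα))
      · rw [Finsupp.notMem_support_iff.1 hα] at h; omega
  set vals : List ℝ := m.support.sort (· ≤ ·) with hvals
  have hvnodup : vals.Nodup := m.support.sort_nodup _
  have hvsort : vals.Pairwise (· < ·) := (Finset.sortedLT_sort _).pairwise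
  have hvmem : ∀ α : ℝ, α ∈ vals ↔ α ∈ m.support := fun α => Finset.mem_sort _
  set run : ℕ → List ℝ := fun i => vals.filter (fun α => decide (i ∈ T α)) with hrun
  set bs : List (List ℝ) := (List.range p).map run with hbs
  set L : List ℝ := bs.flatMap id with hLd
  have hrs : ∀ i, (run i).Pairwise (· < ·) := fun i => List.Pairwise.sublist List.filter_sublist hvsort
  have hrβ : ∀ i < p, β ∈ run i := by
    intro i hi
    simp only [hrun]
    simp only [List.mem_filter, decide_eq_true_eq]
    exact ⟨(hvmem β).2 hβs, hTβ ▸ Finset.mem_range.2 hi⟩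
  have hblocks : ∀ b ∈ bs, β ∈ b ∧ b.Pairwise (· < ·) := by
    intro b hb
    rw [hbs] at hb
    obtain ⟨i, hi, rfl⟩ := List.mem_map.1 hb
    exact ⟨hrβ i (List.mem_range.1 hi), hrs i⟩
  set len : ℕ → ℕ := fun i => (run i).length with hlendef
  have hlen : ∀ i, len i = ∑ α ∈ m.support, if i ∈ T α then 1 else 0 := by
    intro i
    rw [hlendef]
    simp only [hrun, hvals]
    exact length_sort_filter m.support (fun α => i ∈ T α)
  have hlen1 : ∀ i < p, 1 ≤ len i := by
    intro i hi
    rw [hlendef]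
    exact List.length_pos_iff.2 (List.ne_nil_of_mem (hrβ i hi))
  have hTsum : ∀ α ∈ m.support, (∑ i ∈ Finset.range p, if i ∈ T α then 1 else 0) = m α := by
    intro α hα
    rw [Finset.sum_ite_mem, Finset.inter_eq_right.2 (hTsub α), Finset.sum_const, smul_eq_mul,
      mul_one, hTcard α hα]
  have hlensum : (∑ i ∈ Finset.range p, len i) = r := by
    calc (∑ i ∈ Finset.range p, len i)
        = ∑ i ∈ Finset.range p, ∑ α ∈ m.support, if i ∈ T α then 1 else 0 := by
          exact Finset.sum_congr rfl fun i _ => hlen i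
      _ = ∑ α ∈ m.support, ∑ i ∈ Finset.range p, if i ∈ T α then 1 else 0 := Finset.sum_comm
      _ = ∑ α ∈ m.support, m α := Finset.sum_congr rfl hTsum
      _ = r := hmass'
  have hLlen : L.length = r := by
    rw [hLd, List.length_flatMap, hbs, List.map_map, ← hlensum]
    rfl
  set N : ℕ → ℕ := fun j => ∑ i ∈ Finset.range j, len i with hN
  have hNr : N p = r := hlensum
  have hNcuts : ∀ x : ℕ, x ∈ GoodArr.cuts bs ↔ ∃ n < p, x = N (n + 1) := by
    intro x
    rw [GoodArr.mem_cuts_iff]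
    constructor
    · rintro ⟨n, hn, rfl⟩
      rw [hbs] at hn
      simp only [List.length_map, List.length_range] at hn
      refine ⟨n, hn, ?_⟩
      rw [hbs, ← List.map_take, List.take_range, min_eq_left (by omega), List.map_map]
      rfl
    · rintro ⟨n, hn, rfl⟩
      refine ⟨n, by simp [hbs]; omega, ?_⟩
      rw [hbs, ← List.map_take, List.take_range, min_eq_left (by omega), List.map_map]
      rfl
  have hNlt : ∀ a b : ℕ, a < b → b ≤ p → N a < N b := by
    intro a b hab hbp
    rw [hN]
    apply Finset.sum_lt_sum_of_subset (Finset.range_subset_range.2 (le_of_lt hab))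
      (i := a) (by simp [hab]) (by simp) (hlen1 a (lt_of_lt_of_le hab hbp))
    intro j _ _; exact Nat.zero_le _
  have hN1 : ∀ n < p, 1 ≤ N (n + 1) := by
    intro n hn
    have := hNlt 0 (n + 1) (by omega) (by omega)
    simpa [hN, Nat.one_le_iff_ne_zero, Nat.pos_iff_ne_zero] using this
  have hNle : ∀ n < p, N (n + 1) ≤ r := by
    intro n hn
    rcases eq_or_lt_of_le (Nat.succ_le_of_lt hn) with h | h
    · exact le_of_eq (by rw [show n + 1 = p from h, hNr])
    · exact le_of_lt (hNr ▸ hNlt (n + 1) p h (le_refl _))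
  set a0 : ZMod r → ℝ := fun t => L.getD t.val 0 with ha0
  -- a0 is an arrangement
  have harr0 : IsArrangement r m a0 := by
    intro α
    have h2 : ∀ i ∈ Finset.range p, (run i).count α =
        if i ∈ T α ∧ α ∈ m.support then 1 else 0 := by
      intro i _
      by_cases hiT : i ∈ T α
      · simp only [hrun]
        rw [List.count_filter (by simpa using hiT)]
        by_cases hm : α ∈ m.support
        · rw [List.count_eq_one_of_mem hvnodup ((hvmem α).2 hm)]; simp [hiT, hm]
        · rw [List.count_eq_zero_of_not_mem (fun h => hm ((hvmem α).1 h))]; simp [hm]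
      · rw [List.count_eq_zero.2 (fun h => hiT (by simpa using (List.mem_filter.1 h).2))]
        simp [hiT]
    have hcount : L.count α = m α := by
      have h1 : L.count α = ∑ i ∈ Finset.range p, (run i).count α := by
        rw [hLd, List.count_flatMap, hbs, List.map_map]
        rfl
      rw [h1, Finset.sum_congr rfl h2]
      by_cases hm : α ∈ m.support
      · simp only [hm, and_true]
        rw [hTsum α hm]
      · rw [Finsupp.notMem_support_iff.1 hm]
        simp [hm]
    calc (Finset.univ.filter fun t => a0 t = α).card
        = ((Finset.range r).filter fun i => L.getD i 0 = α).card := by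
          apply Finset.card_bij (fun t _ => t.val)
          · intro t ht
            simp only [Finset.mem_filter, Finset.mem_univ, true_and, ha0] at ht
            exact Finset.mem_filter.2 ⟨Finset.mem_range.2 (ZMod.val_lt t), ht⟩
          · intro t _ t' _ h
            exact ZMod.val_injective _ h
          · intro i hi
            simp only [Finset.mem_filter, Finset.mem_range] at hi
            refine ⟨(i : ZMod r), ?_, ZMod.val_cast_of_lt hi.1⟩
            simp only [Finset.mem_filter, Finset.mem_univ, true_and, ha0,
              ZMod.val_cast_of_lt hi.1]
            exact hi.2
      _ = L.count α := by rw [← hLlen]; exact card_filter_range_getD L α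
      _ = m α := hcount
  -- the descent set of a0
  set D0 : Finset (ZMod r) := (Finset.range p).image (fun j => ((N (j + 1) : ℕ) : ZMod r) - 1)
    with hD0d
  have hcast : ∀ n < p, (((N (n + 1) : ℕ) : ZMod r) - 1) = ((N (n + 1) - 1 : ℕ) : ZMod r) := by
    intro n hn
    rw [Nat.cast_sub (hN1 n hn)]
    simp
  have hvalN : ∀ n < p, (((N (n + 1) - 1 : ℕ) : ZMod r)).val = N (n + 1) - 1 := by
    intro n hn
    exact ZMod.val_cast_of_lt (by have := hNle n hn; have := hN1 n hn; omega)
  have hmemD0 : ∀ t : ZMod r, t ∈ D0 ↔ ∃ n < p, t.val + 1 = N (n + 1) := by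
    intro t
    rw [hD0d]
    simp only [Finset.mem_image, Finset.mem_range]
    constructor
    · rintro ⟨n, hn, rfl⟩
      refine ⟨n, hn, ?_⟩
      rw [hcast n hn, hvalN n hn]
      have := hN1 n hn; omega
    · rintro ⟨n, hn, hv⟩
      refine ⟨n, hn, ?_⟩
      rw [hcast n hn]
      have : t = ((t.val : ℕ) : ZMod r) := by simp [ZMod.natCast_val, ZMod.cast_id]
      rw [this]
      congr 1
      omega
  have hrpos : 0 < r := Nat.pos_of_ne_zero (NeZero.ne r)
  have hcutsβ : ∀ b ∈ bs, β ∈ b ∧ b.Pairwise (· < ·) := hblocks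
  have hdesc0 : ∀ t : ZMod r, (a0 (t + 1) ≤ a0 t ↔ ∃ n < p, t.val + 1 = N (n + 1)) := by
    intro t
    have hval : t.val < r := ZMod.val_lt t
    have htc : t = ((t.val : ℕ) : ZMod r) := by simp [ZMod.natCast_val, ZMod.cast_id]
    rcases Nat.lt_or_ge (t.val + 1) r with hlt | hge
    · have ht1 : ((t + 1 : ZMod r)).val = t.val + 1 := by
        rw [show (t : ZMod r) + 1 = ((t.val + 1 : ℕ) : ZMod r) by
          push_cast [ZMod.natCast_val, ZMod.cast_id]; ring]
        exact ZMod.val_cast_of_lt hlt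
      simp only [ha0, ht1]
      constructor
      · intro hd
        by_contra hno
        push_neg at hno
        have hnc : (t.val + 1) ∉ GoodArr.cuts bs := by
          rw [hNcuts]
          rintro ⟨n, hn, he⟩
          exact hno n hn he
        have := GoodArr.flat_lt (fun b hb => (hblocks b hb).2) t.val
          (by rw [← hLd, hLlen]; exact hlt) hnc
        rw [← hLd] at this
        exact absurd hd (not_le.2 this)
      · rintro ⟨n, hn, he⟩
        have hc : (t.val + 1) ∈ GoodArr.cuts bs := (hNcuts _).2 ⟨n, hn, he⟩
        have h1 := GoodArr.flat_le_beta hcutsβ (t.val + 1) (Or.inr hc)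
          (by rw [← hLd, hLlen]; exact hlt)
        have h2 := GoodArr.flat_ge_beta hcutsβ t.val hc
        rw [← hLd] at h1 h2
        exact le_trans h1 h2
    · have hge' : t.val + 1 = r := by omega
      have ht0 : (t : ZMod r) + 1 = 0 := by
        rw [htc, show ((t.val : ℕ) : ZMod r) + 1 = ((t.val + 1 : ℕ) : ZMod r) by push_cast; ring,
          hge', ZMod.natCast_self]
      have hrc : r ∈ GoodArr.cuts bs := by
        rw [hNcuts]
        exact ⟨p - 1, by omega, by rw [Nat.sub_add_cancel hp1, hNr]⟩
      constructor
      · intro _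
        exact ⟨p - 1, by omega, by rw [Nat.sub_add_cancel hp1, hNr, hge']⟩
      · intro _
        simp only [ha0, ht0, ZMod.val_zero]
        have h1 := GoodArr.flat_le_beta hcutsβ 0 (Or.inl rfl) (by rw [← hLd, hLlen]; exact hrpos)
        have h2 := GoodArr.flat_ge_beta hcutsβ t.val (by rw [hge']; exact hrc)
        rw [← hLd] at h1 h2
        exact le_trans h1 h2
  have hD0 : descentSet r a0 = D0 := by
    ext t
    rw [descentSet, Finset.mem_filter]
    simp only [Finset.mem_univ, true_and]
    rw [hdesc0 t, hmemD0 t]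
  have hinj : Set.InjOn (fun j => ((N (j + 1) : ℕ) : ZMod r) - 1) (Finset.range p) := by
    intro i hi j hj hij
    simp only [Finset.coe_range, Set.mem_Iio] at hi hj
    simp only [hcast i hi, hcast j hj] at hij
    have := congrArg ZMod.val hij
    rw [hvalN i hi, hvalN j hj] at this
    by_contra hne
    rcases Nat.lt_or_ge i j with h | h
    · have := hNlt (i + 1) (j + 1) (by omega) (by omega)
      have h1 := hN1 i hi; omega
    · have hji : j < i := by omega
      have := hNlt (j + 1) (i + 1) (by omega) (by omega)
      have h1 := hN1 j hj; omega
  have hcardD0 : D0.card = p := by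
    rw [hD0d, Finset.card_image_of_injOn hinj, Finset.card_range]
  have hsumD0 : (∑ t ∈ D0, t) = ((∑ j ∈ Finset.range p, N (j + 1) : ℕ) : ZMod r) - p := by
    rw [hD0d, Finset.sum_image hinj]
    rw [Finset.sum_sub_distrib, Finset.sum_const, Finset.card_range, Nat.cast_sum]
    simp
  -- the combinatorial sum identity
  have hNsum : (∑ j ∈ Finset.range p, N (j + 1))
      = ∑ α ∈ m.support, ∑ i ∈ T α, (p - i) := by
    have step1 : ∀ j ∈ Finset.range p, N (j + 1)
        = ∑ i ∈ Finset.range p, if i ∈ Finset.range (j + 1) then len i else 0 := by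
      intro j hj
      rw [Finset.sum_ite_mem,
        Finset.inter_eq_right.2 (Finset.range_subset_range.2 (Finset.mem_range.1 hj))]
    rw [Finset.sum_congr rfl step1, Finset.sum_comm]
    have step2 : ∀ i ∈ Finset.range p,
        (∑ j ∈ Finset.range p, if i ∈ Finset.range (j + 1) then len i else 0)
        = ∑ α ∈ m.support, (if i ∈ T α then (p - i) else 0) := by
      intro i hi
      have e1 : (∑ j ∈ Finset.range p, if i ∈ Finset.range (j + 1) then len i else 0)
          = (p - i) * len i := by
        rw [← Finset.sum_filter]
        have hIco : (Finset.range p).filter (fun j => i ∈ Finset.range (j + 1))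
            = Finset.Ico i p := by
          ext j
          simp only [Finset.mem_filter, Finset.mem_range, Finset.mem_Ico, Nat.lt_succ_iff]
          omega
        rw [hIco, Finset.sum_const, Nat.card_Ico, smul_eq_mul]
      rw [e1, hlen i, Finset.mul_sum]
      refine Finset.sum_congr rfl fun α _ => ?_
      rw [mul_ite, mul_one, mul_zero]
    rw [Finset.sum_congr rfl step2, Finset.sum_comm]
    refine Finset.sum_congr rfl fun α hα => ?_
    rw [Finset.sum_ite_mem, Finset.inter_eq_right.2 (hTsub α)]
  -- final assembly
  refine ⟨fun t => a0 (t + k), isArrangement_rot r m a0 harr0 k, ?_, ?_⟩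
  · rw [descentSet_rot, hD0, Finset.card_image_of_injective _ sub_left_injective, hcardD0]
  · rw [descentSet_rot, hD0, Finset.sum_image (fun x _ y _ h => sub_left_injective h)]
    rw [Finset.sum_sub_distrib, hsumD0, Finset.sum_const, hcardD0, hNsum]
    -- split off α'
    have hsplit : (∑ α ∈ m.support, ∑ i ∈ T α, (p - i))
        = (∑ i ∈ S, (p - i)) + C0 := by
      rw [← Finset.add_sum_erase _ _ hα's, hTα', hC0]
      congr 1
      refine Finset.sum_congr rfl fun α hα => ?_
      simp only [hT]
      have : α ≠ α' := Finset.ne_of_mem_erase hα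
      simp [this]
    rw [hsplit]
    have hfS : ((∑ i ∈ S, (p - i) : ℕ) : ZMod r) = (B : ZMod r) + w0 - u0 := by
      rw [Nat.cast_sum, hS, Finset.sum_insert hu0mem,
        Finset.sum_erase_eq_sub (Finset.mem_range.2 hw0q)]
      rw [Nat.cast_sub (le_of_lt hu0p), Nat.cast_sub (by omega : w0 ≤ p)]
      rw [hB, Nat.cast_sum]
      ring
    rw [Nat.cast_add, hfS]
    have hu0c : (u0 : ZMod r) = (w0 : ZMod r) + s := by rw [hu0]; push_cast; ring
    rw [hu0c]
    have hps : (p : ZMod r) • k = (p : ZMod r) * k := by simp [nsmul_eq_mul]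
    rw [nsmul_eq_mul]
    push_cast
    linear_combination -hsk
end

section
/- Let L be a multiplicative abelian group, g = (g_1,…,g_n) a local monodromy vector of rank r on L, and β a convoluter. Suppose g is 1-generic: there is no choice of elements a_i in the support of g_i (i = 1,…,n) with a_1·a_2·⋯·a_n = 1. Suppose moreover that (β^{H_i})^{−1} lies in the support of g_i for each i. Then: (i) β^T ≠ 1; (ii) for every k and every α in the support of g_k, β^T·β^{H_k}·α ≠ 1; and (iii) the inverse pair satisfies the same conventions, namely (β^T)^{−1} ≠ 1 and for every i and every φ in the support of κ_i(β,g), (β^T)^{−1}·(β^{V_i})^{−1}·φ ≠ 1. -/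
open Finset

/-- If `g` is 1-generic (no product of eigenvalues `a_i ∈ supp(g_i)` equals `1`) and each
`(β^{H_i})⁻¹` lies in the support of `g_i`, then the conventions hold for `(β, g)`:
(i) `β^T ≠ 1`; (ii) `β^T β^{H_k} α ≠ 1` for all eigenvalues `α` of `g_k`; and (iii) the
same conventions hold for the inverse pair `(c*β*, κ(β,g))`. -/
theorem one_generic_conventions {L : Type*} [CommGroup L] {n : ℕ} (hn : 1 ≤ n) (r : ℤ)
    (g : Fin n → (L →₀ ℤ)) (hg : ∀ i, divDeg (g i) = r) (β : Convoluter L n)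
    (h1gen : ¬ ∃ a : Fin n → L, (∀ i, a i ∈ (g i).support) ∧ (∏ i, a i) = 1)
    (hH : ∀ i, (β.H i)⁻¹ ∈ (g i).support) :
    β.T ≠ 1 ∧
    (∀ k : Fin n, ∀ α ∈ (g k).support, β.T * β.H k * α ≠ 1) ∧
    ((β.T)⁻¹ ≠ 1 ∧
      ∀ i : Fin n, ∀ φ ∈ (katz β g r i).support, (β.T)⁻¹ * (β.V i)⁻¹ * φ ≠ 1) := by
  have hprodH : ∏ i, β.H i = β.T⁻¹ := by
    rw [eq_inv_iff_mul_eq_one, mul_comm]; exact β.relH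
  -- (i)
  have hT : β.T ≠ 1 := by
    intro hT1
    apply h1gen
    refine ⟨fun i => (β.H i)⁻¹, hH, ?_⟩
    rw [Finset.prod_inv_distrib, hprodH, hT1, inv_inv]
  -- (ii)
  have hii : ∀ k : Fin n, ∀ α ∈ (g k).support, β.T * β.H k * α ≠ 1 := by
    intro k α hα heq
    apply h1gen
    refine ⟨Function.update (fun i => (β.H i)⁻¹) k α, ?_, ?_⟩
    · intro i
      rcases eq_or_ne i k with rfl | hik
      · simpa using hα
      · simpa [Function.update_of_ne hik] using hH i
    · rw [Finset.prod_update_of_mem (Finset.mem_univ k)]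
      have herase : ∏ i ∈ Finset.univ.erase k, β.H i = (β.H k)⁻¹ * β.T⁻¹ := by
        rw [eq_inv_mul_iff_mul_eq, Finset.mul_prod_erase Finset.univ β.H (Finset.mem_univ k)]
        exact hprodH
      have h2 : ∏ i ∈ Finset.univ.erase k, (β.H i)⁻¹ = β.T * β.H k := by
        rw [Finset.prod_inv_distrib, herase, mul_inv_rev, inv_inv, inv_inv]
      rw [← Finset.erase_eq, h2]
      calc α * (β.T * β.H k) = β.T * β.H k * α := by
            simp [mul_comm, mul_left_comm, mul_assoc]
        _ = 1 := heq
  refine ⟨hT, hii, by simpa using hT, ?_⟩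
  -- (iii)
  intro i φ hφ heq
  have hφVT : φ = β.V i * β.T := by
    have : β.V i * β.T * (β.T⁻¹ * (β.V i)⁻¹ * φ) = β.V i * β.T * 1 := by rw [heq]
    rw [mul_one] at this
    rw [← this]; group
  have hzero : (katz β g r i) (β.V i * β.T) = 0 := by
    have hinj : Function.Injective (fun α : L => α * β.U i) :=
      fun a b h => by simpa using mul_right_cancel h
    have hmap : Finsupp.mapDomain (fun α : L => α * β.U i) (g i) (β.V i * β.T)
        = g i (β.H i)⁻¹ := by
      have hval : (β.H i)⁻¹ * β.U i = β.V i * β.T := by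
        rw [β.relU i]; group
      rw [← hval]
      exact Finsupp.mapDomain_apply hinj (g i) _
    have hne : β.V i ≠ β.V i * β.T := by
      intro h
      apply hT
      exact mul_left_cancel (a := β.V i) (by simpa using h)
    simp only [katz, Finsupp.add_apply, Finsupp.sub_apply, hmap,
      Finsupp.single_eq_of_ne hne.symm, Finsupp.single_eq_same]
    ring
  rw [hφVT] at hφ
  exact (Finsupp.mem_support_iff.mp hφ) hzero
end
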